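/- Suppose E[ξ_k | 𝓕_{k−1}] ≥ c almost surely and E[ξ_k²] ≤ C for every k = 1, …, N. Then for every real λ with 0 ≤ λ < Nc one has P(ξ_1 + ⋯ + ξ_N ≤ λ) ≤ 4CN/(Nc − λ)². -/

import Mathlib

open MeasureTheory

section Aux

variable {Ω : Type*} {m m0 : MeasurableSpace Ω} {μ : Measure Ω}

lemma aux_integrable_mul [IsFiniteMeasure μ] {f g : Ω → ℝ} (hf : MemLp f 2 μ) (hg : MemLp g 2 μ) :
    Integrable (fun ω => f ω * g ω) μ := by
  have : MemLp (f • g) 1 μ := MemLp.smul hg hf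
    (hpqr := ⟨by simp [ENNReal.inv_two_add_inv_two]⟩)
  exact memLp_one_iff_integrable.mp this

lemma aux_condexp_memℒp [IsFiniteMeasure μ] (hm : m ≤ m0) {f : Ω → ℝ}
    (hf : MemLp f 2 μ) : MemLp (μ[f|m]) 2 μ := by
  have heq : (condExpL2 ℝ ℝ hm (hf.toLp f) : Ω → ℝ) =ᵐ[μ] μ[f|m] := by
    refine ae_eq_condExp_of_forall_setIntegral_eq hm (hf.integrable one_le_two)
      (fun s _ _ => ?_) (fun s hs hμs => ?_) ?_
    · exact ((Lp.memLp _).integrable one_le_two).integrableOn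
    · rw [integral_condExpL2_eq hm (hf.toLp f) hs hμs.ne]
      exact setIntegral_congr_ae (hm s hs) ((hf.coeFn_toLp).mono fun x hx _ => hx)
    · exact lpMeas.aestronglyMeasurable _
  have h2 : MemLp (condExpL2 ℝ ℝ hm (hf.toLp f) : Ω → ℝ) 2 μ := by
    exact Lp.memLp _
  exact h2.ae_eq heq

lemma aux_orth [IsFiniteMeasure μ] (hm : m ≤ m0) [SigmaFinite (μ.trim hm)] {f g : Ω → ℝ}
    (hf2 : MemLp f 2 μ) (hfm : StronglyMeasurable[m] f) (hg : MemLp g 2 μ) :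
    ∫ ω, f ω * (g ω - (μ[g|m]) ω) ∂μ = 0 := by
  have hgi : Integrable g μ := hg.integrable one_le_two
  have he2 : MemLp (μ[g|m]) 2 μ := aux_condexp_memℒp hm hg
  have h1 : Integrable (fun ω => f ω * g ω) μ := aux_integrable_mul hf2 hg
  have h2 : Integrable (fun ω => f ω * (μ[g|m]) ω) μ := aux_integrable_mul hf2 he2
  have hsplit : ∫ ω, f ω * (g ω - (μ[g|m]) ω) ∂μ
      = ∫ ω, f ω * g ω ∂μ - ∫ ω, f ω * (μ[g|m]) ω ∂μ := by
    rw [← integral_sub h1 h2]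
    congr 1; ext ω; ring
  have hpull : μ[f * g|m] =ᵐ[μ] f * μ[g|m] :=
    condExp_mul_of_stronglyMeasurable_left hfm h1 hgi
  have : ∫ ω, f ω * g ω ∂μ = ∫ ω, f ω * (μ[g|m]) ω ∂μ := by
    calc ∫ ω, f ω * g ω ∂μ = ∫ ω, (μ[f * g|m]) ω ∂μ := (integral_condExp hm).symm
    _ = ∫ ω, (f * μ[g|m]) ω ∂μ := integral_congr_ae hpull
    _ = ∫ ω, f ω * (μ[g|m]) ω ∂μ := rfl
  rw [hsplit, this, sub_self]

end Aux

theorem stmt_17 {Ω : Type*} [m0 : MeasurableSpace Ω] (P : Measure Ω)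
    [IsProbabilityMeasure P]
    (N : ℕ) (𝓕 : ℕ → MeasurableSpace Ω)
    (h𝓕mono : Monotone 𝓕) (h𝓕le : ∀ k, 𝓕 k ≤ m0)
    (c C : ℝ) (hc : 0 < c) (hC : 0 < C)
    (ξ : ℕ → Ω → ℝ)
    (hnonneg : ∀ k ∈ Finset.Icc 1 N, ∀ ω, 0 ≤ ξ k ω)
    (hsq : ∀ k ∈ Finset.Icc 1 N, MemLp (ξ k) 2 P)
    (hmeas : ∀ k ∈ Finset.Icc 1 N, StronglyMeasurable[𝓕 k] (ξ k))
    (hcond : ∀ k ∈ Finset.Icc 1 N, ∀ᵐ ω ∂P, c ≤ (P[ξ k | 𝓕 (k - 1)]) ω)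
    (hsqbd : ∀ k ∈ Finset.Icc 1 N, ∫ ω, (ξ k ω) ^ 2 ∂P ≤ C)
    (l : ℝ) (hl0 : 0 ≤ l) (hl : l < N * c) :
    (P {ω | ∑ k ∈ Finset.Icc 1 N, ξ k ω ≤ l}).toReal
      ≤ 4 * C * N / (N * c - l) ^ 2 := by
  classical
  set s : Finset ℕ := Finset.Icc 1 N with hs
  set e : ℕ → Ω → ℝ := fun k => P[ξ k | 𝓕 (k - 1)] with he
  set d : ℕ → Ω → ℝ := fun k ω => ξ k ω - e k ω with hd
  set M : Ω → ℝ := fun ω => ∑ k ∈ s, d k ω with hM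
  have hcard : (s.card : ℝ) = N := by simp [hs]
  -- basic Lp facts
  have he2 : ∀ k ∈ s, MemLp (e k) 2 P := fun k hk =>
    aux_condexp_memℒp (h𝓕le _) (hsq k hk)
  have hd2 : ∀ k ∈ s, MemLp (d k) 2 P := fun k hk =>
    (hsq k hk).sub (he2 k hk)
  have hdmeas : ∀ k ∈ s, StronglyMeasurable[𝓕 k] (d k) := fun k hk =>
    (hmeas k hk).sub (stronglyMeasurable_condExp.mono (h𝓕mono (Nat.sub_le k 1)))
  -- orthogonality: off-diagonal terms vanish
  have horth : ∀ j ∈ s, ∀ k ∈ s, j ≠ k → ∫ ω, d j ω * d k ω ∂P = 0 := by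
    have key : ∀ j ∈ s, ∀ k ∈ s, j < k → ∫ ω, d j ω * d k ω ∂P = 0 := by
      intro j hj k hk hjk
      have hjle : j ≤ k - 1 := Nat.le_sub_one_of_lt hjk
      exact aux_orth (h𝓕le _) (hd2 j hj)
        ((hdmeas j hj).mono (h𝓕mono hjle)) (hsq k hk)
    intro j hj k hk hne
    rcases hne.lt_or_gt with h | h
    · exact key j hj k hk h
    · have h2 := key k hk j hj h
      calc ∫ ω, d j ω * d k ω ∂P = ∫ ω, d k ω * d j ω ∂P := by
            congr 1; ext ω; ring
        _ = 0 := h2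
  -- diagonal terms bounded by C
  have hdiag : ∀ k ∈ s, ∫ ω, d k ω * d k ω ∂P ≤ C := by
    intro k hk
    have hξ2 := hsq k hk
    have hek := he2 k hk
    have hcm : StronglyMeasurable[𝓕 (k - 1)] (e k) := stronglyMeasurable_condExp
    have h0 : ∫ ω, e k ω * (ξ k ω - e k ω) ∂P = 0 :=
      aux_orth (h𝓕le _) hek hcm hξ2
    have hsplit : ∫ ω, d k ω * d k ω ∂P
        = ∫ ω, ξ k ω * d k ω ∂P - ∫ ω, e k ω * d k ω ∂P := by
      rw [← integral_sub (aux_integrable_mul hξ2 (hd2 k hk))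
        (aux_integrable_mul hek (hd2 k hk))]
      congr 1; ext ω; simp [hd]; ring
    have h0' : ∫ ω, e k ω * d k ω ∂P = 0 := h0
    have hsplit2 : ∫ ω, ξ k ω * d k ω ∂P
        = ∫ ω, ξ k ω ^ 2 ∂P - ∫ ω, ξ k ω * e k ω ∂P := by
      rw [← integral_sub hξ2.integrable_sq (aux_integrable_mul hξ2 hek)]
      congr 1; ext ω; simp [hd]; ring
    have hxe : ∫ ω, ξ k ω * e k ω ∂P = ∫ ω, e k ω * e k ω ∂P := by
      have := aux_orth (h𝓕le (k-1)) hek hcm hξ2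
      have h' : ∫ ω, e k ω * ξ k ω ∂P = ∫ ω, e k ω * e k ω ∂P := by
        rw [← sub_eq_zero, ← integral_sub (aux_integrable_mul hek hξ2)
          (aux_integrable_mul hek hek)]
        rw [← this]; congr 1; ext ω; ring
      rw [← h']; congr 1; ext ω; ring
    have hee : 0 ≤ ∫ ω, e k ω * e k ω ∂P := by
      apply integral_nonneg; intro ω; exact mul_self_nonneg _
    rw [hsplit, h0', sub_zero, hsplit2, hxe]
    have := hsqbd k hk
    linarith
  -- second moment of M
  have hM2 : MemLp M 2 P := by
    have h := memLp_finset_sum' s hd2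
    have heq : (∑ i ∈ s, d i) = M := by
      ext ω; simp [hM, Finset.sum_apply]
    rwa [heq] at h
  have hMint : Integrable (fun ω => M ω ^ 2) P := hM2.integrable_sq
  have hEM : ∫ ω, M ω ^ 2 ∂P ≤ C * N := by
    have hexp : ∀ ω, M ω ^ 2 = ∑ j ∈ s, ∑ k ∈ s, d j ω * d k ω := by
      intro ω
      rw [hM, sq, Finset.sum_mul_sum]
    have hint : ∀ j ∈ s, ∀ k ∈ s, Integrable (fun ω => d j ω * d k ω) P :=
      fun j hj k hk => aux_integrable_mul (hd2 j hj) (hd2 k hk)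
    calc ∫ ω, M ω ^ 2 ∂P = ∫ ω, ∑ j ∈ s, ∑ k ∈ s, d j ω * d k ω ∂P := by
          simp_rw [hexp]
      _ = ∑ j ∈ s, ∫ ω, ∑ k ∈ s, d j ω * d k ω ∂P := by
          exact integral_finset_sum s fun j hj => integrable_finset_sum s fun k hk => hint j hj k hk
      _ = ∑ j ∈ s, ∑ k ∈ s, ∫ ω, d j ω * d k ω ∂P := by
          exact Finset.sum_congr rfl fun j hj => integral_finset_sum s fun k hk => hint j hj k hk
      _ = ∑ j ∈ s, ∫ ω, d j ω * d j ω ∂P := by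
          refine Finset.sum_congr rfl fun j hj => ?_
          exact Finset.sum_eq_single_of_mem j hj fun k hk hne => horth j hj k hk (Ne.symm hne)
      _ ≤ ∑ _j ∈ s, C := Finset.sum_le_sum fun j hj => hdiag j hj
      _ = C * N := by rw [Finset.sum_const, nsmul_eq_mul, hcard]; ring
  -- a.e. lower bound on sum of conditional expectations
  have hMean : ∀ᵐ ω ∂P, (N : ℝ) * c ≤ ∑ k ∈ s, e k ω := by
    have h : ∀ᵐ ω ∂P, ∀ k ∈ s, c ≤ e k ω :=
      (ae_ball_iff s.countable_toSet).2 hcond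
    filter_upwards [h] with ω hω
    calc (N : ℝ) * c = ∑ _k ∈ s, c := by rw [Finset.sum_const, nsmul_eq_mul, hcard]
      _ ≤ ∑ k ∈ s, e k ω := Finset.sum_le_sum hω
  -- the event
  set A : Set Ω := {ω | ∑ k ∈ s, ξ k ω ≤ l} with hA
  have hAmeas : MeasurableSet A := by
    have : Measurable (fun ω => ∑ k ∈ s, ξ k ω) :=
      Finset.measurable_sum s fun k hk => ((hmeas k hk).mono (h𝓕le k)).measurable
    exact measurableSet_le this measurable_const
  have hAM : ∀ᵐ ω ∂P, ω ∈ A → ((N : ℝ) * c - l) ^ 2 ≤ M ω ^ 2 := by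
    filter_upwards [hMean] with ω hω hωA
    have hsum : ∑ k ∈ s, ξ k ω = M ω + ∑ k ∈ s, e k ω := by
      rw [hM]; simp [hd, Finset.sum_sub_distrib]
    have hωA' : ∑ k ∈ s, ξ k ω ≤ l := hωA
    have hMneg : (N : ℝ) * c - l ≤ -M ω := by
      have := hsum ▸ hωA'
      linarith
    have h1 : ((N : ℝ) * c - l) ^ 2 ≤ (-M ω) ^ 2 :=
      pow_le_pow_left₀ (by linarith) hMneg 2
    rwa [neg_pow, show (-1:ℝ)^2 * M ω ^2 = M ω ^2 by ring] at h1
  -- Chebyshev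
  have ht : (0 : ℝ) < ((N : ℝ) * c - l) ^ 2 := pow_pos (sub_pos.2 hl) 2
  have key : (P A).toReal * ((N : ℝ) * c - l) ^ 2 ≤ ∫ ω, M ω ^ 2 ∂P := by
    have h1 : ∫ _ω in A, ((N : ℝ) * c - l) ^ 2 ∂P = (P A).toReal * ((N : ℝ) * c - l) ^ 2 := by
      rw [setIntegral_const]; simp [smul_eq_mul, Measure.real]
    calc (P A).toReal * ((N : ℝ) * c - l) ^ 2
        = ∫ _ω in A, ((N : ℝ) * c - l) ^ 2 ∂P := h1.symm
      _ ≤ ∫ ω in A, M ω ^ 2 ∂P :=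
          setIntegral_mono_on_ae (integrableOn_const)
            hMint.integrableOn hAmeas hAM
      _ ≤ ∫ ω, M ω ^ 2 ∂P :=
          setIntegral_le_integral hMint (ae_of_all _ fun ω => sq_nonneg _)
  have hfinal : (P A).toReal ≤ C * N / ((N : ℝ) * c - l) ^ 2 := by
    rw [le_div_iff₀ ht]
    exact key.trans hEM
  refine hfinal.trans ?_
  have hnum : C * (N : ℝ) ≤ 4 * C * N := by
    nlinarith [(N.cast_nonneg : (0:ℝ) ≤ N), hC.le]
  exact (div_le_div_iff_of_pos_right ht).2 hnum
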